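/- Let n = 3 and let z ∈ ℂ with |z| = 1 and Im z ≠ 0. Define K_z(x) = (z/|x|²)^{1/4} · K_{1/2}(z^{1/2}|x|) for x ∈ ℝ³ \ {0}, using principal branches, and let K₁ = K_z · 1_{{x : |x| ≤ 1}}. Then K₁ belongs to weak L³(ℝ³) with norm bounded uniformly in z, and there exists a constant C (uniform in z) such that ‖u ∗ K₁‖_{L^∞(ℝ³)} ≤ C ‖u‖_{L^{3/2,1}(ℝ³)} for all u in the Lorentz space L^{3/2,1}(ℝ³). -/

import Mathlib

open MeasureTheory Complex ENNReal

noncomputable section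

/-- The modified Bessel function of the second kind,
`K_ν(w) = ∫₀^∞ e^{-w cosh t} cosh(ν t) dt`, for `Re w > 0`. -/
def besselK (ν w : ℂ) : ℂ :=
  ∫ t in Set.Ioi (0 : ℝ), Complex.exp (-w * Real.cosh t) * Complex.cosh (ν * t)

/-- The resolvent kernel `K_z(x) = (z/|x|²)^{(n-2)/4} K_{(n-2)/2}(z^{1/2}|x|)`, the inverse
Fourier transform of `ξ ↦ 1/(-|ξ|² + z)`, with principal branches of the complex powers. -/
def resolventKernel (n : ℕ) (z : ℂ) (x : EuclideanSpace ℝ (Fin n)) : ℂ :=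
  (z / ((‖x‖ : ℂ)) ^ 2) ^ (((n : ℂ) - 2) / 4) *
    besselK (((n : ℂ) - 2) / 2) (z ^ ((1 : ℂ) / 2) * (‖x‖ : ℂ))

/-- The weak `L^p` quasinorm `sup_{λ>0} λ·μ{x : |g(x)|>λ}^{1/p}`. -/
def weakNorm {α : Type*} [MeasurableSpace α] (μ : Measure α) (p : ℝ) (g : α → ℂ) : ℝ≥0∞ :=
  ⨆ (l : ℝ) (_ : 0 < l), ENNReal.ofReal l * (μ {x | l < ‖g x‖}) ^ (1 / p)

/-- The Lorentz `L^{p,1}` norm `∫₀^∞ μ{x : |f(x)|>λ}^{1/p} dλ`. -/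
def lorentzNorm {α : Type*} [MeasurableSpace α] (μ : Measure α) (p : ℝ) (f : α → ℂ) : ℝ≥0∞ :=
  ∫⁻ l in Set.Ioi (0 : ℝ), (μ {x | l < ‖f x‖}) ^ (1 / p)

open Set

section Aux

lemma sqrt_z_eq (z : ℂ) (h1 : ‖z‖ = 1) :
    z ^ ((1:ℂ)/2) = Complex.exp ((z.arg / 2 : ℝ) * I) := by
  have hz : z ≠ 0 := by intro h; simp [h] at h1
  rw [Complex.cpow_def_of_ne_zero hz, Complex.log, h1, Real.log_one]
  push_cast
  ring_nf

lemma sqrt_z_abs (z : ℂ) (h1 : ‖z‖ = 1) :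
    ‖z ^ ((1:ℂ)/2)‖ = 1 := by
  rw [sqrt_z_eq z h1, Complex.norm_exp]
  simp

lemma sqrt_z_re_pos (z : ℂ) (h1 : ‖z‖ = 1) (h2 : z.im ≠ 0) :
    0 < (z ^ ((1:ℂ)/2)).re := by
  rw [sqrt_z_eq z h1, Complex.exp_ofReal_mul_I_re]
  apply Real.cos_pos_of_mem_Ioo
  constructor
  · have := Complex.neg_pi_lt_arg z; linarith
  · have : z.arg ≤ Real.pi := Complex.arg_le_pi z
    rcases lt_or_eq_of_le this with h | h
    · linarith
    · exact absurd ((Complex.arg_eq_pi_iff).mp h).2 h2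

lemma sinh_half_image : (fun t : ℝ => Real.sinh (t/2)) '' (Ioi 0) = Ioi 0 := by
  apply Set.eq_of_subset_of_subset
  · rintro u ⟨t, ht, rfl⟩
    exact Real.sinh_pos_iff.mpr (by simpa using half_pos (mem_Ioi.mp ht))
  · intro u hu
    refine ⟨2 * Real.arsinh u, ?_, by simp [Real.sinh_arsinh]⟩
    have : 0 < Real.arsinh u := Real.arsinh_pos_iff.mpr hu
    exact Set.mem_Ioi.mpr (by linarith)

lemma besselK_half (w : ℂ) (hw : 0 < w.re) :
    besselK (1/2) w = (↑Real.pi/(2*w)) ^ ((1:ℂ)/2) * Complex.exp (-w) := by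
  have key := integral_image_eq_integral_abs_deriv_smul (s := Ioi (0:ℝ))
    (f := fun t => Real.sinh (t/2)) (f' := fun t => Real.cosh (t/2) / 2)
    measurableSet_Ioi
    (fun x _ => by
      have h2 : HasDerivAt (fun t : ℝ => t/2) (1/2 : ℝ) x := (hasDerivAt_id x).div_const 2
      have : HasDerivAt (fun t : ℝ => Real.sinh (t/2)) (Real.cosh (x/2) * (1/2)) x :=
        h2.sinh
      simpa [div_eq_mul_inv, mul_comm] using this.hasDerivWithinAt)
    (fun a _ b _ hab => by
      have := Real.sinh_injective hab
      linarith)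
    (fun u => (2:ℂ) * Complex.exp (-w * (1 + 2 * u^2)))
  rw [sinh_half_image] at key
  have hrhs : (∫ t in Ioi (0:ℝ), |Real.cosh (t/2) / 2| • ((2:ℂ) * Complex.exp (-w * (1 + 2 * (Real.sinh (t/2):ℂ)^2)))) = besselK (1/2) w := by
    unfold besselK
    apply setIntegral_congr_fun measurableSet_Ioi
    intro t _
    have hco : (0:ℝ) < Real.cosh (t/2) := Real.cosh_pos (t/2)
    have hcosh : (1 : ℝ) + 2 * (Real.sinh (t/2))^2 = Real.cosh t := by
      have h1 := Real.cosh_sq (t/2)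
      have h2 : Real.cosh t = Real.cosh (t/2)^2 + Real.sinh (t/2)^2 := by
        rw [← Real.cosh_two_mul (t/2)]; congr 1; ring
      rw [h2, h1]; ring
    have hcoshC : ((1:ℂ) + 2*(Real.sinh (t/2):ℂ)^2) = (Real.cosh t : ℂ) := by
      have := congrArg (fun r : ℝ => (r:ℂ)) hcosh
      push_cast at this
      simpa using this
    have hch : Complex.cosh ((1:ℂ)/2 * t) = (Real.cosh (t/2) : ℂ) := by
      rw [Complex.ofReal_cosh]
      push_cast
      ring_nf
    simp only [hcoshC, hch, abs_of_pos (by positivity : (0:ℝ) < Real.cosh (t/2)/2), real_smul]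
    push_cast
    ring
  rw [hrhs] at key
  have hlhs : (∫ u in Ioi (0:ℝ), (2:ℂ) * Complex.exp (-w * (1 + 2 * (u:ℂ)^2))) = (↑Real.pi/(2*w)) ^ ((1:ℂ)/2) * Complex.exp (-w) := by
    have hint : ∀ u : ℝ, (2:ℂ) * Complex.exp (-w * (1 + 2 * (u:ℂ)^2)) = (2 * Complex.exp (-w)) * Complex.exp (-(2*w) * (u:ℂ)^2) := by
      intro u
      have h : -w * (1 + 2*(u:ℂ)^2) = -w + -(2*w)*(u:ℂ)^2 := by ring
      rw [h, Complex.exp_add]; ring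
    simp_rw [hint]
    rw [MeasureTheory.integral_const_mul, integral_gaussian_complex_Ioi (by simpa using hw : 0 < (2*w).re)]
    ring
  rw [← key, hlhs]

abbrev E3 := EuclideanSpace ℝ (Fin 3)
def c0 : ℝ := Real.sqrt (Real.pi/2)
def Vb : ℝ≥0∞ := volume (Metric.ball (0 : E3) 1)
def Gk (w : E3) : ℝ≥0∞ :=
  Set.indicator {w : E3 | ‖w‖ ≤ 1} (fun w => ENNReal.ofReal (c0/‖w‖)) w

lemma hc0 : 0 < c0 := Real.sqrt_pos.mpr (by positivity)
lemma hVb0 : Vb ≠ 0 := (Metric.measure_ball_pos volume _ one_pos).ne'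
lemma hVbt : Vb ≠ ⊤ := measure_ball_lt_top.ne
lemma hκ : 0 < Vb.toReal := ENNReal.toReal_pos hVb0 hVbt

def c1 : ℝ := (3/2) * c0 * Vb.toReal ^ ((1:ℝ)/3)
lemma hc1 : 0 < c1 := by
  have := hc0; have := hκ
  unfold c1; positivity

lemma ball_vol (x : E3) {s : ℝ} (hs : 0 ≤ s) :
    volume (Metric.ball x s) = ENNReal.ofReal (s^3) * Vb := by
  have := MeasureTheory.Measure.addHaar_ball (volume : Measure E3) x hs
  rw [finrank_euclideanSpace_fin] at this
  exact this

lemma normset_meas (x : E3) : MeasurableSet {y : E3 | ‖x - y‖ ≤ 1} :=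
  measurableSet_le ((continuous_const.sub continuous_id).norm).measurable measurable_const

lemma hfm (x : E3) : Measurable (fun y : E3 => if ‖x - y‖ ≤ 1 then c0/‖x - y‖ else 0) :=
  Measurable.ite (normset_meas x)
    (measurable_const.div ((continuous_const.sub continuous_id).norm).measurable)
    measurable_const

lemma Gk_meas : Measurable Gk := by
  apply Measurable.indicator
  · exact ENNReal.measurable_ofReal.comp (measurable_const.div continuous_norm.measurable)
  · exact measurableSet_le continuous_norm.measurable measurable_const

lemma potential_bound (x : E3) (A : Set E3) :
    (∫⁻ y in A, Gk (x - y)) ≤ ENNReal.ofReal c1 * (volume A) ^ ((2:ℝ)/3) := by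
  classical
  set f : E3 → ℝ := fun y => if ‖x - y‖ ≤ 1 then c0/‖x - y‖ else 0 with hf
  have hGf : ∀ y, Gk (x - y) = ENNReal.ofReal (f y) := by
    intro y
    by_cases h : ‖x - y‖ ≤ 1 <;>
      simp [Gk, Set.indicator, h, hf]
  set a := volume A with ha
  rcases eq_or_ne a 0 with h0 | h0
  · have : volume.restrict A = 0 := Measure.restrict_eq_zero.mpr h0
    simp [this]
  rcases eq_or_ne a ⊤ with ht | ht
  · rw [ht, ENNReal.top_rpow_of_pos (by norm_num), ENNReal.mul_top
      (by simpa using hc1.not_ge : ENNReal.ofReal c1 ≠ 0)]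
    exact le_top
  -- main case
  have ha' : 0 < a.toReal := ENNReal.toReal_pos h0 ht
  set a' := a.toReal with ha'def
  set b := a' ^ ((1:ℝ)/3) with hbdef
  set k := Vb.toReal ^ ((1:ℝ)/3) with hkdef
  have hb : 0 < b := Real.rpow_pos_of_pos ha' _
  have hk : 0 < k := Real.rpow_pos_of_pos hκ _
  set s₀ := c0 * k / b with hs₀def
  have hs₀ : 0 < s₀ := div_pos (mul_pos hc0 hk) hb
  have hb3 : b ^ (3:ℕ) = a' := by
    rw [hbdef, ← Real.rpow_natCast (a' ^ ((1:ℝ)/3)) 3, ← Real.rpow_mul ha'.le]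
    norm_num
  have hk3 : k ^ (3:ℕ) = Vb.toReal := by
    rw [hkdef, ← Real.rpow_natCast (Vb.toReal ^ ((1:ℝ)/3)) 3, ← Real.rpow_mul hκ.le]
    norm_num
  have hb2 : b ^ (2:ℕ) = a' ^ ((2:ℝ)/3) := by
    rw [hbdef, ← Real.rpow_natCast (a' ^ ((1:ℝ)/3)) 2, ← Real.rpow_mul ha'.le]
    norm_num
  -- layer cake
  have hlayer : (∫⁻ y in A, ENNReal.ofReal (f y)) =
      ∫⁻ s in Ioi (0:ℝ), (volume.restrict A) {y | s < f y} :=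
    lintegral_eq_lintegral_meas_lt (volume.restrict A)
      (Filter.Eventually.of_forall (fun y => by
        by_cases h : ‖x - y‖ ≤ 1 <;> simp [hf, h, div_nonneg hc0.le (norm_nonneg _)]))
      (hfm x).aemeasurable
  -- bounds on the distribution function
  have hMa : ∀ s : ℝ, (volume.restrict A) {y | s < f y} ≤ a := by
    intro s
    calc (volume.restrict A) {y | s < f y} ≤ (volume.restrict A) univ :=
          measure_mono (subset_univ _)
      _ = a := by rw [Measure.restrict_apply_univ]
  have hMb : ∀ s : ℝ, 0 < s → (volume.restrict A) {y | s < f y} ≤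
      ENNReal.ofReal ((c0/s)^3) * Vb := by
    intro s hs
    have hsub : {y : E3 | s < f y} ⊆ Metric.ball x (c0/s) := by
      intro y hy
      simp only [mem_setOf_eq, hf] at hy
      by_cases h : ‖x - y‖ ≤ 1
      · rw [if_pos h] at hy
        have hxy : 0 < ‖x - y‖ := by
          rcases eq_or_lt_of_le (norm_nonneg (x - y)) with h' | h'
          · rw [← h'] at hy; simp at hy; linarith
          · exact h'
        have : ‖x - y‖ < c0 / s := by
          rw [lt_div_iff₀ hs]
          rw [lt_div_iff₀ hxy] at hy
          linarith [hy]
        rw [Metric.mem_ball, dist_eq_norm, norm_sub_rev]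
        exact this
      · rw [if_neg h] at hy; linarith
    calc (volume.restrict A) {y | s < f y} ≤ volume {y : E3 | s < f y} :=
          Measure.restrict_le_self _
      _ ≤ volume (Metric.ball x (c0/s)) := measure_mono hsub
      _ = ENNReal.ofReal ((c0/s)^3) * Vb := ball_vol x (div_nonneg hc0.le hs.le)
  have hpow : ∀ s : ℝ, 0 < s → (c0/s)^3 = c0^3 * ((s^3)⁻¹) := by
    intro s hs
    rw [div_pow, div_eq_mul_inv]
  have hmeas2 : Measurable (fun s : ℝ => ENNReal.ofReal (c0^3 * (s^3)⁻¹) * Vb) :=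
    (ENNReal.measurable_ofReal.comp
      (((measurable_id.pow_const 3).inv).const_mul _)).mul_const _
  have heqon : ∀ s ∈ Ioi s₀, c0^3 * s^(-3:ℝ) = c0^3 * ((s^3)⁻¹) := by
    intro s hs
    have hs' : (0:ℝ) < s := hs₀.trans hs
    rw [Real.rpow_neg hs'.le, ← Real.rpow_natCast s 3]
    norm_num
  have hfi : IntegrableOn (fun s : ℝ => c0^3 * ((s^3)⁻¹)) (Ioi s₀) := by
    refine IntegrableOn.congr_fun ?_ (fun s hs => heqon s hs) measurableSet_Ioi
    exact (integrableOn_Ioi_rpow_of_lt (by norm_num : (-3:ℝ) < -1) hs₀).const_mul _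
  have hnn : 0 ≤ᵐ[volume.restrict (Ioi s₀)] (fun s : ℝ => c0^3 * ((s^3)⁻¹)) := by
    refine (ae_restrict_iff' measurableSet_Ioi).mpr (Filter.Eventually.of_forall ?_)
    intro s hs
    have hs' : (0:ℝ) < s := hs₀.trans hs
    exact mul_nonneg (pow_nonneg hc0.le 3) (by positivity)
  have hint2 : (∫⁻ s in Ioi s₀, ENNReal.ofReal (c0^3 * ((s^3)⁻¹))) =
      ENNReal.ofReal (c0^3 * ((s₀^2)⁻¹/2)) := by
    rw [← ofReal_integral_eq_lintegral_ofReal hfi hnn]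
    congr 1
    rw [← setIntegral_congr_fun measurableSet_Ioi (fun s hs => heqon s hs),
      MeasureTheory.integral_const_mul, integral_Ioi_rpow_of_lt (by norm_num : (-3:ℝ) < -1) hs₀]
    rw [show (-3:ℝ)+1 = -2 by norm_num, Real.rpow_neg hs₀.le, ← Real.rpow_natCast s₀ 2]
    push_cast
    ring
  calc (∫⁻ y in A, Gk (x - y))
      = ∫⁻ s in Ioi (0:ℝ), (volume.restrict A) {y | s < f y} := by
        rw [← hlayer]
        exact lintegral_congr (fun y => hGf y)
    _ ≤ (∫⁻ s in Ioc (0:ℝ) s₀, (volume.restrict A) {y | s < f y}) +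
        (∫⁻ s in Ioi s₀, (volume.restrict A) {y | s < f y}) := by
        rw [← Set.Ioc_union_Ioi_eq_Ioi hs₀.le]
        exact lintegral_union_le _ _ _
    _ ≤ (∫⁻ _ in Ioc (0:ℝ) s₀, a) +
        (∫⁻ s in Ioi s₀, ENNReal.ofReal (c0^3 * ((s^3)⁻¹)) * Vb) := by
        refine add_le_add (lintegral_mono (fun s => hMa s)) (setLIntegral_mono hmeas2 ?_)
        intro s hs
        have hs' : (0:ℝ) < s := hs₀.trans hs
        rw [← hpow s hs']
        exact hMb s hs'
    _ = a * ENNReal.ofReal s₀ + ENNReal.ofReal (c0^3 * ((s₀^2)⁻¹/2)) * Vb := by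
        have hm3 : Measurable (fun s : ℝ => ENNReal.ofReal (c0^3 * ((s^3)⁻¹))) :=
          ENNReal.measurable_ofReal.comp (((measurable_id.pow_const 3).inv).const_mul _)
        rw [setLIntegral_const, Real.volume_Ioc, lintegral_mul_const _ hm3, hint2]
        norm_num
    _ = ENNReal.ofReal (a' * s₀ + c0^3 * ((s₀^2)⁻¹/2) * Vb.toReal) := by
        have hnn2 : (0:ℝ) ≤ c0^3 * ((s₀^2)⁻¹/2) :=
          mul_nonneg (pow_nonneg hc0.le 3) (by positivity)
        have hnn3 : (0:ℝ) ≤ a' * s₀ := mul_nonneg ENNReal.toReal_nonneg hs₀.le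
        have hnn4 : (0:ℝ) ≤ c0^3 * ((s₀^2)⁻¹/2) * Vb.toReal :=
          mul_nonneg hnn2 ENNReal.toReal_nonneg
        conv_lhs => rw [← ENNReal.ofReal_toReal ht, ← ENNReal.ofReal_toReal hVbt]
        rw [← ENNReal.ofReal_mul ha'.le, ← ENNReal.ofReal_mul hnn2,
          ← ENNReal.ofReal_add hnn3 hnn4]
    _ = ENNReal.ofReal c1 * a ^ ((2:ℝ)/3) := by
        have hc1' : c1 = 3/2 * c0 * k := by
          unfold c1
          rw [← hkdef]
        have hsalg : a' * s₀ + c0^3 * ((s₀^2)⁻¹/2) * Vb.toReal = c1 * a'^((2:ℝ)/3) := by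
          rw [← hb2, ← hb3, ← hk3, hs₀def, hc1']
          have h1 := hb.ne'
          have h2 := hc0.ne'
          have h3 := hk.ne'
          field_simp
          ring
        rw [hsalg, ENNReal.ofReal_mul hc1.le]
        congr 1
        rw [← ENNReal.ofReal_toReal ht, ← ha'def, ENNReal.ofReal_rpow_of_pos ha']

lemma kernel_bound (z : ℂ) (h1 : ‖z‖ = 1) (h2 : z.im ≠ 0)
    (x : EuclideanSpace ℝ (Fin 3)) (hx : x ≠ 0) :
    ‖resolventKernel 3 z x‖ ≤ c0 / ‖x‖ := by
  unfold c0
  set r := ‖x‖ with hrdef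
  have hr : 0 < r := norm_pos_iff.mpr hx
  have hz : z ≠ 0 := by intro h; simp [h] at h1
  set w := z ^ ((1:ℂ)/2) * (r : ℂ) with hwdef
  have hwre : 0 < w.re := by
    have : w.re = (z ^ ((1:ℂ)/2)).re * r := by simp [hwdef, Complex.mul_re]
    rw [this]
    exact mul_pos (sqrt_z_re_pos z h1 h2) hr
  have habsw : ‖w‖ = r := by
    rw [hwdef, norm_mul, sqrt_z_abs z h1, one_mul]; simp [abs_of_pos hr]
  have h34 : (((3:ℕ) : ℂ) - 2) / 4 = 1/4 := by norm_num
  have h32 : (((3:ℕ) : ℂ) - 2) / 2 = 1/2 := by norm_num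
  rw [resolventKernel, h34, h32, ← hrdef, ← hwdef, besselK_half w hwre]
  have hbase : z / (r:ℂ)^2 ≠ 0 := by
    apply div_ne_zero hz
    simpa using (pow_ne_zero 2 (by exact_mod_cast hr.ne' : (r:ℂ) ≠ 0))
  have hbase2 : (↑Real.pi) / (2*w) ≠ 0 := by
    apply div_ne_zero
    · exact_mod_cast Real.pi_ne_zero
    · intro h
      have := congrArg (‖·‖) h
      simp [habsw, hr.ne'] at this
  have hA : ‖(z / (r:ℂ)^2) ^ ((1:ℂ)/4)‖ = (1/r^2) ^ ((1:ℝ)/4) := by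
    rw [Complex.norm_cpow_of_ne_zero hbase]
    simp [abs_of_pos hr, h1, sq_abs]
  have hB : ‖((↑Real.pi) / (2*w)) ^ ((1:ℂ)/2)‖ = (Real.pi/(2*r)) ^ ((1:ℝ)/2) := by
    rw [Complex.norm_cpow_of_ne_zero hbase2]
    simp [abs_of_pos Real.pi_pos, habsw, abs_of_pos hr]
  have hC : ‖Complex.exp (-w)‖ ≤ 1 := by
    rw [Complex.norm_exp]
    simp only [Complex.neg_re]
    exact Real.exp_le_one_iff.mpr (by linarith)
  calc ‖(z / (r:ℂ)^2) ^ ((1:ℂ)/4) * ((↑Real.pi/(2*w)) ^ ((1:ℂ)/2) * Complex.exp (-w))‖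
      = ‖(z / (r:ℂ)^2) ^ ((1:ℂ)/4)‖ * (‖((↑Real.pi) / (2*w)) ^ ((1:ℂ)/2)‖ * ‖Complex.exp (-w)‖) := by
        simp [norm_mul]
    _ ≤ (1/r^2) ^ ((1:ℝ)/4) * ((Real.pi/(2*r)) ^ ((1:ℝ)/2) * 1) := by
        rw [hA, hB]
        gcongr
    _ = Real.sqrt (Real.pi/2) / r := by
        rw [mul_one, Real.sqrt_eq_rpow]
        have e1 : (1/r^2 : ℝ) ^ ((1:ℝ)/4) = r ^ (-((1:ℝ)/2)) := by
          rw [one_div, ← Real.rpow_natCast r 2, ← Real.rpow_neg hr.le, ← Real.rpow_mul hr.le]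
          norm_num
        have e2 : (Real.pi/(2*r)) ^ ((1:ℝ)/2) = (Real.pi/2) ^ ((1:ℝ)/2) * r ^ (-((1:ℝ)/2)) := by
          rw [show Real.pi/(2*r) = (Real.pi/2) * r⁻¹ by field_simp]
          rw [Real.mul_rpow (by positivity) (by positivity), Real.inv_rpow hr.le,
            ← Real.rpow_neg hr.le]
        rw [e1, e2, show r ^ (-((1:ℝ)/2)) * ((Real.pi/2) ^ ((1:ℝ)/2) * r ^ (-((1:ℝ)/2)))
            = (Real.pi/2) ^ ((1:ℝ)/2) * (r ^ (-((1:ℝ)/2)) * r ^ (-((1:ℝ)/2))) from by ring,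
          ← Real.rpow_add hr]
        norm_num
        rw [Real.rpow_neg_one]
        exact (div_eq_mul_inv _ _).symm

lemma kernel_zero (z : ℂ) : resolventKernel 3 z 0 = 0 := by
  unfold resolventKernel
  rw [norm_zero]
  push_cast
  rw [zero_pow (by norm_num : (2:ℕ) ≠ 0), _root_.div_zero, zero_cpow (by norm_num : ((3:ℂ) - 2)/4 ≠ 0), zero_mul]

def K1 (z : ℂ) : E3 → ℂ :=
  Set.indicator {x : E3 | ‖x‖ ≤ 1} (resolventKernel 3 z)

lemma K1_enorm_le (z : ℂ) (h1 : ‖z‖ = 1) (h2 : z.im ≠ 0) (y : E3) :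
    ENNReal.ofReal ‖K1 z y‖ ≤ Gk y := by
  by_cases hy : ‖y‖ ≤ 1
  · have hymem : y ∈ {x : E3 | ‖x‖ ≤ 1} := hy
    rcases eq_or_ne y 0 with rfl | hy0
    · rw [show K1 z 0 = 0 from by simp [K1, Set.indicator, kernel_zero z]]
      simp
    · have hb := kernel_bound z h1 h2 y hy0
      unfold K1 Gk
      rw [Set.indicator_of_mem hymem, Set.indicator_of_mem hymem]
      exact ENNReal.ofReal_le_ofReal hb
  · have hymem : y ∉ {x : E3 | ‖x‖ ≤ 1} := hy
    unfold K1 Gk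
    rw [Set.indicator_of_notMem hymem, Set.indicator_of_notMem hymem]
    simp

lemma weak_bound (z : ℂ) (h1 : ‖z‖ = 1) (h2 : z.im ≠ 0) :
    weakNorm volume 3 (K1 z) ≤ ENNReal.ofReal (c0 * Vb.toReal ^ ((1:ℝ)/3)) := by
  set k := Vb.toReal ^ ((1:ℝ)/3) with hk
  have hkpos : 0 < k := Real.rpow_pos_of_pos hκ _
  refine iSup_le fun l => iSup_le fun hl => ?_
  have hsub : {x : E3 | l < ‖K1 z x‖} ⊆ Metric.ball 0 (c0/l) := by
    intro y hy
    simp only [mem_setOf_eq] at hy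
    have h' : ENNReal.ofReal l < ENNReal.ofReal ‖K1 z y‖ :=
      (ENNReal.ofReal_lt_ofReal_iff_of_nonneg hl.le).mpr hy
    have hGy : ENNReal.ofReal l < Gk y := h'.trans_le (K1_enorm_le z h1 h2 y)
    have hymem : ‖y‖ ≤ 1 ∧ l < c0/‖y‖ := by
      by_cases hy1 : ‖y‖ ≤ 1
      · refine ⟨hy1, ?_⟩
        unfold Gk at hGy
        rw [Set.indicator_of_mem (show y ∈ {x : E3 | ‖x‖ ≤ 1} from hy1)] at hGy
        exact (ENNReal.ofReal_lt_ofReal_iff_of_nonneg hl.le).mp hGy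
      · unfold Gk at hGy
        rw [Set.indicator_of_notMem (show y ∉ {x : E3 | ‖x‖ ≤ 1} from hy1)] at hGy
        exact absurd hGy (by simp)
    have hy0 : y ≠ 0 := by
      intro h
      have h2' := hymem.2
      rw [h, norm_zero] at h2'
      simp at h2'
      linarith
    have hyn : 0 < ‖y‖ := norm_pos_iff.mpr hy0
    have hlt : ‖y‖ < c0/l := by
      have h'' := hymem.2
      rw [lt_div_iff₀ hyn] at h''
      rw [lt_div_iff₀ hl]
      linarith
    simpa [Metric.mem_ball, dist_eq_norm] using hlt
  have hvol : volume {x : E3 | l < ‖K1 z x‖} ≤ ENNReal.ofReal ((c0/l)^3) * Vb :=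
    le_trans (measure_mono hsub) (le_of_eq (ball_vol 0 (div_nonneg hc0.le hl.le)))
  have hcl : (((c0/l)^3 : ℝ))^((1:ℝ)/3) = c0/l := by
    rw [← Real.rpow_natCast (c0/l) 3, ← Real.rpow_mul (div_nonneg hc0.le hl.le)]
    norm_num
  calc ENNReal.ofReal l * (volume {x : E3 | l < ‖K1 z x‖}) ^ ((1:ℝ)/3)
      ≤ ENNReal.ofReal l * (ENNReal.ofReal ((c0/l)^3) * Vb) ^ ((1:ℝ)/3) := by
        gcongr
    _ = ENNReal.ofReal (c0 * k) := by
        rw [ENNReal.mul_rpow_of_nonneg _ _ (by norm_num : (0:ℝ) ≤ 1/3)]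
        rw [ENNReal.ofReal_rpow_of_pos (pow_pos (div_pos hc0 hl) 3), hcl]
        rw [← ENNReal.ofReal_toReal hVbt, ENNReal.ofReal_rpow_of_pos hκ]
        rw [← ENNReal.ofReal_mul (div_nonneg hc0.le hl.le), ← ENNReal.ofReal_mul hl.le]
        congr 1
        field_simp
        rw [hk]

lemma conv_bound (z : ℂ) (h1 : ‖z‖ = 1) (h2 : z.im ≠ 0)
    (u : E3 → ℂ) (hu : AEStronglyMeasurable u volume) :
    eLpNorm (convolution u (K1 z) (ContinuousLinearMap.mul ℂ ℂ) volume) ⊤ volume ≤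
      ENNReal.ofReal c1 * lorentzNorm volume (3/2) u := by
  classical
  set v := hu.mk u with hvdef
  have hvm : StronglyMeasurable v := hu.stronglyMeasurable_mk
  have huv : u =ᵐ[volume] v := hu.ae_eq_mk
  have hvnorm : Measurable fun t : E3 => ‖v t‖ := hvm.measurable.norm
  have hdist : ∀ s : ℝ, volume {t : E3 | s < ‖v t‖} = volume {t : E3 | s < ‖u t‖} := by
    intro s
    apply measure_congr
    rw [Filter.eventuallyEq_set]
    filter_upwards [huv] with t ht
    rw [ht]
  rw [eLpNorm_exponent_top, eLpNormEssSup]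
  refine essSup_le_of_ae_le _ (Filter.Eventually.of_forall fun x => ?_)
  have e23 : (1:ℝ) / ((3:ℝ)/2) = 2/3 := by norm_num
  set gx : E3 → ℝ≥0∞ := fun t => Gk (x - t) with hgx
  have hgxm : Measurable gx := Gk_meas.comp (measurable_const.sub measurable_id)
  have hgxfin : ∀ t, gx t < ⊤ := by
    intro t
    show Gk (x - t) < ⊤
    by_cases h : (x - t) ∈ {w : E3 | ‖w‖ ≤ 1}
    · unfold Gk
      rw [Set.indicator_of_mem h]
      exact ENNReal.ofReal_lt_top
    · unfold Gk
      rw [Set.indicator_of_notMem h]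
      simp
  calc (‖convolution u (K1 z) (ContinuousLinearMap.mul ℂ ℂ) volume x‖₊ : ℝ≥0∞)
      ≤ ∫⁻ t, ENNReal.ofReal ‖u t‖ * ENNReal.ofReal ‖K1 z (x - t)‖ := by
        rw [convolution_def]
        refine le_trans (enorm_integral_le_lintegral_enorm _) (le_of_eq ?_)
        refine lintegral_congr fun t => ?_
        rw [ofReal_norm, ofReal_norm, enorm_eq_nnnorm, enorm_eq_nnnorm, enorm_eq_nnnorm,
          ← ENNReal.coe_mul, ← nnnorm_mul]
        norm_num
    _ ≤ ∫⁻ t, ENNReal.ofReal ‖u t‖ * gx t := by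
        refine lintegral_mono fun t => ?_
        exact mul_le_mul_right (K1_enorm_le z h1 h2 (x - t)) _
    _ = ∫⁻ t, ENNReal.ofReal ‖v t‖ * gx t := by
        refine lintegral_congr_ae ?_
        filter_upwards [huv] with t ht
        rw [ht]
    _ = ∫⁻ t, ENNReal.ofReal ‖v t‖ ∂(volume.withDensity gx) := by
        rw [lintegral_withDensity_eq_lintegral_mul_non_measurable volume hgxm
          (Filter.Eventually.of_forall hgxfin)]
        exact lintegral_congr fun t => (mul_comm _ _)
    _ = ∫⁻ s in Ioi (0:ℝ), (volume.withDensity gx) {t | s < ‖v t‖} :=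
        lintegral_eq_lintegral_meas_lt (volume.withDensity gx)
          (Filter.Eventually.of_forall fun t => norm_nonneg _)
          hvnorm.aemeasurable
    _ ≤ ∫⁻ s in Ioi (0:ℝ), ENNReal.ofReal c1 * (volume {t : E3 | s < ‖v t‖}) ^ ((2:ℝ)/3) := by
        refine lintegral_mono fun s => ?_
        rw [withDensity_apply _ (measurableSet_lt measurable_const hvnorm)]
        exact potential_bound x _
    _ = ENNReal.ofReal c1 * lorentzNorm volume (3/2) u := by
        rw [lintegral_const_mul' _ _ ENNReal.ofReal_ne_top]
        congr 1
        unfold lorentzNorm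
        rw [e23]
        exact lintegral_congr fun s => by rw [hdist s]

end Aux

/-- For `n = 3` and `|z| = 1`, `Im z ≠ 0`, the part `K₁ = K_z·1_{|x|≤1}` of the resolvent
kernel near the origin belongs to weak `L³(ℝ³)` with norm bounded uniformly in `z`, and
`‖u ∗ K₁‖_{L^∞(ℝ³)} ≤ C ‖u‖_{L^{3/2,1}(ℝ³)}` with `C` uniform in `z`. -/
theorem inner_kernel_bound_dim_three :
    ∃ C : ℝ, 0 < C ∧ ∀ z : ℂ, ‖z‖ = 1 → z.im ≠ 0 →
      weakNorm volume 3
        (Set.indicator {x : EuclideanSpace ℝ (Fin 3) | ‖x‖ ≤ 1} (resolventKernel 3 z)) ≤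
        ENNReal.ofReal C ∧
      ∀ u : EuclideanSpace ℝ (Fin 3) → ℂ, AEStronglyMeasurable u volume →
        lorentzNorm volume (3 / 2) u < ⊤ →
        eLpNorm
          (convolution u
            (Set.indicator {x : EuclideanSpace ℝ (Fin 3) | ‖x‖ ≤ 1} (resolventKernel 3 z))
            (ContinuousLinearMap.mul ℂ ℂ) volume)
          ⊤ volume ≤
        ENNReal.ofReal C * lorentzNorm volume (3 / 2) u := by
  have hk : 0 < c0 * Vb.toReal ^ ((1:ℝ)/3) :=
    mul_pos hc0 (Real.rpow_pos_of_pos hκ _)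
  refine ⟨c0 * Vb.toReal ^ ((1:ℝ)/3) + c1, by linarith [hc1], fun z h1 h2 => ⟨?_, ?_⟩⟩
  · exact le_trans (weak_bound z h1 h2)
      (ENNReal.ofReal_le_ofReal (by linarith [hc1]))
  · intro u hu _
    exact le_trans (conv_bound z h1 h2 u hu)
      (mul_le_mul_left (ENNReal.ofReal_le_ofReal (by linarith)) _)
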